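/- Define the metric ρ_h(f, g) = inf{ε > 0 : f ≤ g + ε·h and g ≤ f + ε·h pointwise} on the family K_h of convex functions f : ℝ^d → [0,∞] with f(0)=0 admitting a quadratic majorant f ≤ a·h for some a > 0, where h(x) = ‖x‖²/2. Then (K_h, ρ_h) is a complete metric space. -/
import Mathlib


open Filter
open scoped Topology

noncomputable section

/-- The self-polar function `h(x) = ‖x‖²/2`. -/
def hFun {d : ℕ} (x : EuclideanSpace ℝ (Fin d)) : ℝ := ‖x‖ ^ 2 / 2

/-- The family `K_h` of non-negative convex functions vanishing at the origin which admit a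
quadratic majorant `f ≤ a h`. -/
def Kh (d : ℕ) : Set (EuclideanSpace ℝ (Fin d) → ℝ) :=
  {f | ConvexOn ℝ Set.univ f ∧ f 0 = 0 ∧ (∀ x, 0 ≤ f x) ∧ ∃ a : ℝ, ∀ x, f x ≤ a * hFun x}

/-- The metric `ρ_h(f,g) = inf{ε ≥ 0 : |f − g| ≤ ε h pointwise}`. -/
def rhoH {d : ℕ} (f g : EuclideanSpace ℝ (Fin d) → ℝ) : ℝ :=
  sInf {ε : ℝ | 0 ≤ ε ∧ ∀ x, |f x - g x| ≤ ε * hFun x}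

lemma hFun_nonneg {d : ℕ} (x : EuclideanSpace ℝ (Fin d)) : 0 ≤ hFun x := by
  unfold hFun; positivity

lemma rhoS_bdd {d : ℕ} (f g : EuclideanSpace ℝ (Fin d) → ℝ) :
    BddBelow {ε : ℝ | 0 ≤ ε ∧ ∀ x, |f x - g x| ≤ ε * hFun x} :=
  ⟨0, fun _ hε => hε.1⟩

lemma rhoH_spec {d : ℕ} {f g : EuclideanSpace ℝ (Fin d) → ℝ}
    (hne : ∃ ε, 0 ≤ ε ∧ ∀ x, |f x - g x| ≤ ε * hFun x) :
    0 ≤ rhoH f g ∧ ∀ x, |f x - g x| ≤ rhoH f g * hFun x := by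
  obtain ⟨ε₀, hε₀, hb₀⟩ := hne
  have hne' : ({ε : ℝ | 0 ≤ ε ∧ ∀ x, |f x - g x| ≤ ε * hFun x}).Nonempty := ⟨ε₀, hε₀, hb₀⟩
  have h0 : 0 ≤ rhoH f g := le_csInf hne' fun _ hε => hε.1
  refine ⟨h0, fun x => ?_⟩
  rcases eq_or_lt_of_le (hFun_nonneg x) with hx | hx
  · have := hb₀ x
    rw [← hx, mul_zero] at this ⊢
    exact this
  · rw [← div_le_iff₀ hx]
    exact le_csInf hne' fun ε hε => (div_le_iff₀ hx).2 (hε.2 x)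

lemma Kh_pair_bound {d : ℕ} {f g : EuclideanSpace ℝ (Fin d) → ℝ}
    (hf : f ∈ Kh d) (hg : g ∈ Kh d) :
    ∃ ε, 0 ≤ ε ∧ ∀ x, |f x - g x| ≤ ε * hFun x := by
  obtain ⟨-, -, hf0, a, ha⟩ := hf
  obtain ⟨-, -, hg0, b, hb⟩ := hg
  refine ⟨max (max a b) 0, le_max_right _ _, fun x => ?_⟩
  have hx := hFun_nonneg x
  rw [abs_sub_le_iff]
  constructor
  · calc f x - g x ≤ f x := by linarith [hg0 x]
      _ ≤ a * hFun x := ha x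
      _ ≤ max (max a b) 0 * hFun x :=
        mul_le_mul_of_nonneg_right (le_trans (le_max_left a b) (le_max_left _ _)) hx
  · calc g x - f x ≤ g x := by linarith [hf0 x]
      _ ≤ b * hFun x := hb x
      _ ≤ max (max a b) 0 * hFun x :=
        mul_le_mul_of_nonneg_right (le_trans (le_max_right a b) (le_max_left _ _)) hx


/-- `(K_h, ρ_h)` is a complete metric space: `ρ_h` separates points, is symmetric, satisfies
the triangle inequality, and every Cauchy sequence converges in `ρ_h` to an element of `K_h`. -/
theorem Kh_complete_metric {d : ℕ} :
    (∀ f ∈ Kh d, ∀ g ∈ Kh d, (rhoH f g = 0 ↔ f = g)) ∧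
    (∀ f g : EuclideanSpace ℝ (Fin d) → ℝ, rhoH f g = rhoH g f) ∧
    (∀ f ∈ Kh d, ∀ g ∈ Kh d, ∀ k ∈ Kh d, rhoH f k ≤ rhoH f g + rhoH g k) ∧
    (∀ fs : ℕ → (EuclideanSpace ℝ (Fin d) → ℝ), (∀ n, fs n ∈ Kh d) →
      (∀ δ : ℝ, 0 < δ → ∃ N, ∀ m ≥ N, ∀ n ≥ N, rhoH (fs m) (fs n) ≤ δ) →
      ∃ f ∈ Kh d, Tendsto (fun n => rhoH (fs n) f) atTop (𝓝 0)) := by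
  refine ⟨?_, ?_, ?_, ?_⟩
  · -- separation
    intro f hf g hg
    constructor
    · intro h0
      obtain ⟨-, hsp⟩ := rhoH_spec (Kh_pair_bound hf hg)
      funext x
      have := hsp x
      rw [h0, zero_mul] at this
      have := abs_nonpos_iff.1 this
      linarith [sub_eq_zero.1 this]
    · rintro rfl
      refine le_antisymm (csInf_le (rhoS_bdd _ _) ⟨le_refl 0, fun x => by simp [hFun_nonneg x]⟩)
        (rhoH_spec ⟨0, le_refl 0, fun x => by simp [hFun_nonneg x]⟩).1
  · -- symmetry
    intro f g
    unfold rhoH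
    congr 1
    ext ε
    simp [abs_sub_comm]
  · -- triangle
    intro f hf g hg k hk
    obtain ⟨h1, hsp1⟩ := rhoH_spec (Kh_pair_bound hf hg)
    obtain ⟨h2, hsp2⟩ := rhoH_spec (Kh_pair_bound hg hk)
    refine csInf_le (rhoS_bdd _ _) ⟨by linarith, fun x => ?_⟩
    calc |f x - k x| ≤ |f x - g x| + |g x - k x| := abs_sub_le _ _ _
      _ ≤ rhoH f g * hFun x + rhoH g k * hFun x := add_le_add (hsp1 x) (hsp2 x)
      _ = (rhoH f g + rhoH g k) * hFun x := by ring
  · -- completeness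
    intro fs hfs hcau
    -- pointwise bound lemma
    have key : ∀ δ : ℝ, 0 < δ → ∃ N, ∀ m ≥ N, ∀ n ≥ N, ∀ x,
        |fs m x - fs n x| ≤ δ * hFun x := by
      intro δ hδ
      obtain ⟨N, hN⟩ := hcau δ hδ
      refine ⟨N, fun m hm n hn x => ?_⟩
      obtain ⟨-, hsp⟩ := rhoH_spec (Kh_pair_bound (hfs m) (hfs n))
      exact le_trans (hsp x) (mul_le_mul_of_nonneg_right (hN m hm n hn) (hFun_nonneg x))
    -- pointwise Cauchy
    have hcx : ∀ x, CauchySeq (fun n => fs n x) := by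
      intro x
      rw [Metric.cauchySeq_iff]
      intro ε hε
      have hδ : (0:ℝ) < ε / (hFun x + 1) := div_pos hε (by linarith [hFun_nonneg x])
      obtain ⟨N, hN⟩ := key _ hδ
      refine ⟨N, fun m hm n hn => ?_⟩
      have := hN m hm n hn x
      rw [Real.dist_eq]
      calc |fs m x - fs n x| ≤ ε / (hFun x + 1) * hFun x := this
        _ < ε := by
          rw [div_mul_eq_mul_div, div_lt_iff₀ (by linarith [hFun_nonneg x])]
          nlinarith [hFun_nonneg x, hε]
    choose f htend using fun x => cauchySeq_tendsto_of_complete (hcx x)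
    have hconv : ∀ δ : ℝ, 0 < δ → ∃ N, ∀ n ≥ N, ∀ x, |fs n x - f x| ≤ δ * hFun x := by
      intro δ hδ
      obtain ⟨N, hN⟩ := key δ hδ
      refine ⟨N, fun n hn x => ?_⟩
      have htd : Tendsto (fun m => |fs n x - fs m x|) atTop (𝓝 |fs n x - f x|) :=
        (tendsto_const_nhds.sub (htend x)).abs
      refine le_of_tendsto htd (eventually_atTop.2 ⟨N, fun m hm => hN n hn m hm x⟩)
    have hmem : f ∈ Kh d := by
      refine ⟨⟨convex_univ, fun x _ y _ a b ha hb hab => ?_⟩, ?_, ?_, ?_⟩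
      · have h1 : Tendsto (fun n => fs n (a • x + b • y)) atTop (𝓝 (f (a • x + b • y))) :=
          htend _
        have h2 : Tendsto (fun n => a * fs n x + b * fs n y) atTop (𝓝 (a * f x + b * f y)) :=
          ((htend x).const_mul a).add ((htend y).const_mul b)
        exact le_of_tendsto_of_tendsto' h1 h2 fun n =>
          (hfs n).1.2 (Set.mem_univ x) (Set.mem_univ y) ha hb hab
      · have h1 : Tendsto (fun n => fs n 0) atTop (𝓝 (f 0)) := htend 0
        have h2 : Tendsto (fun n : ℕ => fs n 0) atTop (𝓝 0) := by
          simpa [(hfs _).2.1] using tendsto_const_nhds (α := ℝ) (f := atTop (α := ℕ))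
        exact tendsto_nhds_unique h1 h2
      · intro x
        exact ge_of_tendsto' (htend x) fun n => (hfs n).2.2.1 x
      · obtain ⟨N, hN⟩ := hconv 1 one_pos
        obtain ⟨a, ha⟩ := (hfs N).2.2.2
        refine ⟨a + 1, fun x => ?_⟩
        have h1 := hN N le_rfl x
        have h2 := ha x
        have := abs_sub_le_iff.1 h1
        nlinarith [this.2]
    refine ⟨f, hmem, ?_⟩
    rw [Metric.tendsto_atTop]
    intro ε hε
    obtain ⟨N, hN⟩ := hconv (ε / 2) (by linarith)
    refine ⟨N, fun n hn => ?_⟩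
    have hne : ∃ ε', 0 ≤ ε' ∧ ∀ x, |fs n x - f x| ≤ ε' * hFun x :=
      ⟨ε / 2, by linarith, hN n hn⟩
    have hle : rhoH (fs n) f ≤ ε / 2 :=
      csInf_le (rhoS_bdd _ _) ⟨by linarith, hN n hn⟩
    have h0 := (rhoH_spec hne).1
    rw [Real.dist_eq, sub_zero, abs_of_nonneg h0]
    linarith
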